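/- Tangents of canonical angles are controlled by the Schur-quotient block (Lemma 2.1). Let 1 ≤ p ≤ q < d and let X ∈ ℝ^{d×p} have invertible top block X_{(1:p,:)}. Let θ_1 ≤ … ≤ θ_p be the canonical angles between span(X) and the q-dimensional coordinate subspace span([I_q; 0]) (vectors supported on the first q coordinates). Then every θ_j < π/2 and, for ‖·‖ being either the spectral norm or the Frobenius norm, ‖diag(tan θ_1, …, tan θ_p)‖ ≤ ‖𝒯_q(X)‖. Moreover, if p = q the inequality is an equality. -/

import Mathlib

open Matrix

/-- Frobenius norm of a real matrix. -/
noncomputable def frobNorm {m n : ℕ} (A : Matrix (Fin m) (Fin n) ℝ) : ℝ :=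
  Real.sqrt (∑ i, ∑ j, A i j ^ 2)

/-- Spectral norm (ℓ²-operator norm) of a real matrix. -/
noncomputable def specNorm {m n : ℕ} (A : Matrix (Fin m) (Fin n) ℝ) : ℝ :=
  sSup {c : ℝ | ∃ x : Fin n → ℝ, ∑ j, x j ^ 2 ≤ 1 ∧ c = Real.sqrt (∑ i, (A.mulVec x) i ^ 2)}

/-- Top `p×p` block of a `d×p` matrix. -/
def topBlock {d p : ℕ} (h : p ≤ d) (X : Matrix (Fin d) (Fin p) ℝ) :
    Matrix (Fin p) (Fin p) ℝ :=
  Matrix.of fun i j => X (Fin.castLE h i) j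

/-- `θ` enumerates the canonical angles between the column spans of the orthonormal
`A ∈ ℝ^{d×p}` and `B ∈ ℝ^{d×q}`: `θ` is nondecreasing with values in `[0, π/2]` and
the numbers `cos²θ_j` are (with multiplicity) the eigenvalues of `(AᵀB)(AᵀB)ᵀ`,
i.e. `cos θ_j` are the singular values of `AᵀB`. -/
def IsCanonAngles {d p q : ℕ} (A : Matrix (Fin d) (Fin p) ℝ)
    (B : Matrix (Fin d) (Fin q) ℝ) (θ : Fin p → ℝ) : Prop :=
  Monotone θ ∧ (∀ j, 0 ≤ θ j ∧ θ j ≤ Real.pi / 2) ∧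
  ∃ (h : ((Aᵀ * B) * (Aᵀ * B)ᵀ).IsHermitian) (e : Fin p ≃ Fin p),
    ∀ j, Real.cos (θ j) ^ 2 = h.eigenvalues (e j)

/-- Tangents of the canonical angles between `span X` and the coordinate subspace
`span(e₁,…,e_q)` are controlled by the Schur-quotient block `𝒯_q(X)`:
all angles are `< π/2` and `‖diag(tan θ)‖ ≤ ‖𝒯_q(X)‖` in both the spectral and the
Frobenius norm, with equality when `p = q`. -/

lemma finSumSplit {dq dd : ℕ} (h : dq ≤ dd) (f : Fin dd → ℝ) :
    ∑ i, f i = (∑ i : Fin dq, f (Fin.castLE h i)) +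
      ∑ i : Fin (dd - dq), f ⟨dq + i, by have := i.isLt; omega⟩ := by
  have h' : dq + (dd - dq) = dd := by omega
  rw [← Equiv.sum_comp (finCongr h') f, Fin.sum_univ_add]
  congr 1

lemma quad_form_eq {m n : ℕ} (C : Matrix (Fin m) (Fin n) ℝ) (u : Fin n → ℝ) :
    u ⬝ᵥ ((Cᵀ * C) *ᵥ u) = ∑ i, ((C *ᵥ u) i)^2 := by
  rw [← Matrix.mulVec_mulVec, Matrix.dotProduct_mulVec, ← Matrix.mulVec_transpose,
    Matrix.transpose_transpose]
  simp [dotProduct, sq]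

lemma specNorm_bddAbove {m n : ℕ} (A : Matrix (Fin m) (Fin n) ℝ) :
    BddAbove {c : ℝ | ∃ x : Fin n → ℝ, ∑ j, x j ^ 2 ≤ 1 ∧
      c = Real.sqrt (∑ i, (A.mulVec x) i ^ 2)} := by
  refine ⟨Real.sqrt (∑ i, ∑ j, A i j ^ 2), ?_⟩
  rintro c ⟨x, hx, rfl⟩
  apply Real.sqrt_le_sqrt
  apply Finset.sum_le_sum
  intro i _
  have hcs := Finset.sum_mul_sq_le_sq_mul_sq Finset.univ (fun j => A i j) x
  have hnn : (0:ℝ) ≤ ∑ j, A i j ^ 2 := Finset.sum_nonneg fun _ _ => sq_nonneg _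
  calc (A.mulVec x) i ^ 2 = (∑ j, A i j * x j) ^ 2 := rfl
    _ ≤ (∑ j, A i j ^ 2) * ∑ j, x j ^ 2 := hcs
    _ ≤ (∑ j, A i j ^ 2) * 1 := by apply mul_le_mul_of_nonneg_left hx hnn
    _ = ∑ j, A i j ^ 2 := mul_one _

lemma le_specNorm {m n : ℕ} (A : Matrix (Fin m) (Fin n) ℝ) (x : Fin n → ℝ)
    (hx : ∑ j, x j ^ 2 ≤ 1) :
    Real.sqrt (∑ i, (A.mulVec x) i ^ 2) ≤ specNorm A :=
  le_csSup (specNorm_bddAbove A) ⟨x, hx, rfl⟩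

lemma specNorm_nonneg {m n : ℕ} (A : Matrix (Fin m) (Fin n) ℝ) : 0 ≤ specNorm A :=
  le_trans (Real.sqrt_nonneg _) (le_specNorm A 0 (by simp))

lemma specNorm_le {m n : ℕ} (A : Matrix (Fin m) (Fin n) ℝ) {c : ℝ} (hc : 0 ≤ c)
    (h : ∀ x : Fin n → ℝ, ∑ j, x j ^ 2 ≤ 1 → ∑ i, (A.mulVec x) i ^ 2 ≤ c ^ 2) :
    specNorm A ≤ c := by
  refine csSup_le ⟨Real.sqrt (∑ i, (A.mulVec 0) i ^ 2), 0, by simp, rfl⟩ ?_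
  rintro y ⟨x, hx, rfl⟩
  calc Real.sqrt (∑ i, (A.mulVec x) i ^ 2) ≤ Real.sqrt (c^2) := Real.sqrt_le_sqrt (h x hx)
    _ = c := by rw [Real.sqrt_sq hc]

lemma specNorm_diagonal_le {n : ℕ} (t : Fin n → ℝ) {c : ℝ} (hc : 0 ≤ c)
    (h : ∀ j, |t j| ≤ c) : specNorm (Matrix.diagonal t) ≤ c := by
  apply specNorm_le _ hc
  intro x hx
  have he : ∀ i, ((Matrix.diagonal t).mulVec x) i ^ 2 = t i ^2 * x i ^2 := by
    intro i; rw [Matrix.mulVec_diagonal]; ring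
  simp only [he]
  calc ∑ i, t i ^2 * x i ^2 ≤ ∑ i, c^2 * x i ^2 := by
        apply Finset.sum_le_sum
        intro i _
        apply mul_le_mul_of_nonneg_right _ (sq_nonneg _)
        calc t i ^2 = |t i|^2 := (sq_abs _).symm
          _ ≤ c^2 := by apply pow_le_pow_left₀ (abs_nonneg _) (h i)
    _ = c^2 * ∑ i, x i ^2 := by rw [Finset.mul_sum]
    _ ≤ c^2 * 1 := mul_le_mul_of_nonneg_left hx (sq_nonneg _)
    _ = c^2 := mul_one _

lemma le_specNorm_diagonal {n : ℕ} (t : Fin n → ℝ) (j : Fin n) (hj : 0 ≤ t j) :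
    t j ≤ specNorm (Matrix.diagonal t) := by
  have h1 : ∑ i, (Pi.single j 1 : Fin n → ℝ) i ^2 ≤ 1 := by
    rw [Finset.sum_eq_single j] <;> simp +contextual [Pi.single_apply]
  have h := le_specNorm (Matrix.diagonal t) (Pi.single j 1) h1
  have h2 : ∑ i, ((Matrix.diagonal t).mulVec (Pi.single j 1)) i ^2 = t j ^2 := by
    rw [Finset.sum_eq_single j]
    · simp [Matrix.mulVec_diagonal]
    · intro b _ hb; simp [Matrix.mulVec_diagonal, Pi.single_apply, hb]
    · simp
  rw [h2, Real.sqrt_sq hj] at h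
  exact h


lemma eig_unit_vec {n : ℕ} {S : Matrix (Fin n) (Fin n) ℝ} (h : S.IsHermitian) (j : Fin n) :
    ∃ v : Fin n → ℝ, (∑ i, v i ^ 2 = 1) ∧ S *ᵥ v = h.eigenvalues j • v := by
  refine ⟨⇑(h.eigenvectorBasis j), ?_, h.mulVec_eigenvectorBasis j⟩
  have h1 : ‖h.eigenvectorBasis j‖ = 1 := h.eigenvectorBasis.orthonormal.1 j
  rw [EuclideanSpace.norm_eq] at h1
  have h0 : (0:ℝ) ≤ ∑ i, ‖h.eigenvectorBasis j i‖^2 := Finset.sum_nonneg fun _ _ => sq_nonneg _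
  have h2 : ∑ i, ‖h.eigenvectorBasis j i‖^2 = 1 := by
    nlinarith [Real.sq_sqrt h0]
  simpa [Real.norm_eq_abs, sq_abs] using h2

lemma star_coe_unitary {n : ℕ} (U : Matrix.unitaryGroup (Fin n) ℝ) :
    star (U : Matrix (Fin n) (Fin n) ℝ) = (U : Matrix (Fin n) (Fin n) ℝ)ᵀ := by
  rw [Matrix.star_eq_conjTranspose, Matrix.conjTranspose_eq_transpose_of_trivial]

lemma quad_eigen_lower {n : ℕ} {S : Matrix (Fin n) (Fin n) ℝ} (h : S.IsHermitian) {c : ℝ}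
    (hc : ∀ i, c ≤ h.eigenvalues i) (y : Fin n → ℝ) :
    c * ∑ i, y i ^ 2 ≤ y ⬝ᵥ (S *ᵥ y) := by
  set U : Matrix (Fin n) (Fin n) ℝ := (h.eigenvectorUnitary : Matrix (Fin n) (Fin n) ℝ) with hU
  have hUU : U * Uᵀ = 1 := by
    rw [← star_coe_unitary]; exact (Matrix.mem_unitaryGroup_iff).mp h.eigenvectorUnitary.2
  have hD : S = U * Matrix.diagonal h.eigenvalues * Uᵀ := by
    rw [← star_coe_unitary]; exact h.spectral_theorem
  set w : Fin n → ℝ := Uᵀ *ᵥ y with hw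
  have key : y ⬝ᵥ (S *ᵥ y) = ∑ i, h.eigenvalues i * w i ^ 2 := by
    conv_lhs => rw [hD]
    rw [ ← Matrix.mulVec_mulVec, ← Matrix.mulVec_mulVec, Matrix.dotProduct_mulVec,
      ← Matrix.mulVec_transpose]
    simp only [← hw, dotProduct]
    congr 1; ext i
    rw [Matrix.mulVec_diagonal]; ring
  have hwy : ∑ i, w i ^ 2 = ∑ i, y i ^ 2 := by
    have : ∑ i, w i ^ 2 = y ⬝ᵥ ((U * Uᵀ) *ᵥ y) := by
      rw [← Matrix.mulVec_mulVec, Matrix.dotProduct_mulVec, ← Matrix.mulVec_transpose]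
      simp [← hw, dotProduct, sq]
    rw [this, hUU, Matrix.one_mulVec]
    simp [dotProduct, sq]
  rw [key, ← hwy, Finset.mul_sum]
  apply Finset.sum_le_sum
  intro i _
  exact mul_le_mul_of_nonneg_right (hc i) (sq_nonneg _)

lemma trace_inv_eq {n : ℕ} {S : Matrix (Fin n) (Fin n) ℝ} (h : S.IsHermitian)
    (hlam : ∀ i, h.eigenvalues i ≠ 0) :
    Matrix.trace S⁻¹ = ∑ i, (h.eigenvalues i)⁻¹ := by
  set U : Matrix (Fin n) (Fin n) ℝ := (h.eigenvectorUnitary : Matrix (Fin n) (Fin n) ℝ) with hU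
  have hUU : U * Uᵀ = 1 := by
    rw [← star_coe_unitary]; exact (Matrix.mem_unitaryGroup_iff).mp h.eigenvectorUnitary.2
  have hUU' : Uᵀ * U = 1 := by
    rw [← star_coe_unitary]; exact (Matrix.mem_unitaryGroup_iff').mp h.eigenvectorUnitary.2
  have hD : S = U * Matrix.diagonal h.eigenvalues * Uᵀ := by
    rw [← star_coe_unitary]; exact h.spectral_theorem
  have hinv : S⁻¹ = U * Matrix.diagonal (fun i => (h.eigenvalues i)⁻¹) * Uᵀ := by
    apply Matrix.inv_eq_right_inv
    have e0 := congrArg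
      (fun M => M * (U * Matrix.diagonal (fun i => (h.eigenvalues i)⁻¹) * Uᵀ)) hD
    rw [e0]
    calc U * Matrix.diagonal h.eigenvalues * Uᵀ *
          (U * Matrix.diagonal (fun i => (h.eigenvalues i)⁻¹) * Uᵀ)
        = U * Matrix.diagonal h.eigenvalues * (Uᵀ * U) *
            Matrix.diagonal (fun i => (h.eigenvalues i)⁻¹) * Uᵀ := by
          simp only [Matrix.mul_assoc]
      _ = U * (Matrix.diagonal h.eigenvalues *
            Matrix.diagonal (fun i => (h.eigenvalues i)⁻¹)) * Uᵀ := by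
          rw [hUU']; simp only [Matrix.mul_assoc, Matrix.one_mul]
      _ = 1 := by
          rw [Matrix.diagonal_mul_diagonal]
          have : (fun i => h.eigenvalues i * (h.eigenvalues i)⁻¹) = fun _ => (1:ℝ) := by
            funext i; exact mul_inv_cancel₀ (hlam i)
          rw [this, Matrix.diagonal_one, Matrix.mul_one, hUU]
  rw [hinv, Matrix.trace_mul_cycle, hUU', Matrix.one_mul, Matrix.trace_diagonal]

lemma inv_quad_antitone {n : ℕ} (S T : Matrix (Fin n) (Fin n) ℝ)
    (hS : Sᵀ = S) (hT : Tᵀ = T) (hSu : IsUnit S.det) (hTu : IsUnit T.det)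
    (hTpsd : ∀ u, 0 ≤ u ⬝ᵥ (T *ᵥ u))
    (hle : ∀ u, u ⬝ᵥ (T *ᵥ u) ≤ u ⬝ᵥ (S *ᵥ u)) (x : Fin n → ℝ) :
    x ⬝ᵥ (S⁻¹ *ᵥ x) ≤ x ⬝ᵥ (T⁻¹ *ᵥ x) := by
  set y : Fin n → ℝ := S⁻¹ *ᵥ x with hy
  set z : Fin n → ℝ := y - T⁻¹ *ᵥ x with hz
  have hTT : T * T⁻¹ = 1 := Matrix.mul_nonsing_inv T hTu
  have hSS : S * S⁻¹ = 1 := Matrix.mul_nonsing_inv S hSu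
  have hTx : T *ᵥ (T⁻¹ *ᵥ x) = x := by rw [Matrix.mulVec_mulVec, hTT, Matrix.one_mulVec]
  have hSx : S *ᵥ y = x := by rw [hy, Matrix.mulVec_mulVec, hSS, Matrix.one_mulVec]
  have expand : z ⬝ᵥ (T *ᵥ z) = y ⬝ᵥ (T *ᵥ y) - 2 * (x ⬝ᵥ y) + x ⬝ᵥ (T⁻¹ *ᵥ x) := by
    rw [hz, Matrix.mulVec_sub, dotProduct_sub, sub_dotProduct,
      sub_dotProduct, hTx]
    have e1 : (T⁻¹ *ᵥ x) ⬝ᵥ (T *ᵥ y) = x ⬝ᵥ y := by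
      rw [Matrix.dotProduct_mulVec, ← Matrix.mulVec_transpose, hT, hTx]
    have e2 : (T⁻¹ *ᵥ x) ⬝ᵥ x = x ⬝ᵥ (T⁻¹ *ᵥ x) := dotProduct_comm _ _
    have e3 : y ⬝ᵥ x = x ⬝ᵥ y := dotProduct_comm _ _
    rw [e1, e2, e3]; ring
  have h1 : 0 ≤ z ⬝ᵥ (T *ᵥ z) := hTpsd z
  have h2 : y ⬝ᵥ (T *ᵥ y) ≤ x ⬝ᵥ y := by
    have := hle y
    have e4 : y ⬝ᵥ (S *ᵥ y) = x ⬝ᵥ y := by rw [hSx]; exact dotProduct_comm _ _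
    linarith [e4 ▸ this]
  have h3 : x ⬝ᵥ y = x ⬝ᵥ (S⁻¹ *ᵥ x) := rfl
  linarith [expand ▸ h1]


lemma trace_conj_nonneg {m n : ℕ} (C : Matrix (Fin m) (Fin n) ℝ) (N : Matrix (Fin n) (Fin n) ℝ)
    (hN : ∀ w : Fin n → ℝ, 0 ≤ w ⬝ᵥ (N *ᵥ w)) : 0 ≤ Matrix.trace ((Cᵀ * C) * N) := by
  have e1 : (Cᵀ * C) * N = Cᵀ * (C * N) := by rw [Matrix.mul_assoc]
  rw [e1, ← Matrix.trace_mul_comm]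
  have e2 : ∀ i, ((C * N) * Cᵀ) i i = (fun k => C i k) ⬝ᵥ (N *ᵥ fun k => C i k) := by
    intro i
    simp only [Matrix.mul_apply, Matrix.transpose_apply, dotProduct, Matrix.mulVec,
      Finset.sum_mul, Finset.mul_sum]
    rw [Finset.sum_comm]
    apply Finset.sum_congr rfl; intro k _
    apply Finset.sum_congr rfl; intro j _
    ring
  rw [Matrix.trace]
  apply Finset.sum_nonneg
  intro i _
  rw [Matrix.diag_apply, e2 i]
  exact hN _

lemma frob_trace {m n : ℕ} (C : Matrix (Fin m) (Fin n) ℝ) :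
    Matrix.trace (Cᵀ * C) = ∑ i, ∑ j, C i j ^ 2 := by
  rw [Matrix.trace]
  rw [Finset.sum_comm]
  apply Finset.sum_congr rfl; intro i _
  simp [Matrix.diag_apply, Matrix.mul_apply, sq]

lemma diag_sq_sum {n : ℕ} (t : Fin n → ℝ) :
    ∑ i, ∑ j, (Matrix.diagonal t) i j ^2 = ∑ i, t i ^2 := by
  apply Finset.sum_congr rfl; intro i _
  rw [Finset.sum_eq_single i]
  · simp
  · intro b _ hb; simp [Matrix.diagonal_apply, (Ne.symm hb : ¬ i = b)]
  · simp

theorem tan_theta_bound (d p q : ℕ) (hp : 1 ≤ p) (hpq : p ≤ q) (hqd : q < d)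
    (X : Matrix (Fin d) (Fin p) ℝ)
    (hX : IsUnit (topBlock (hpq.trans hqd.le) X))
    (A : Matrix (Fin d) (Fin p) ℝ) (hA : Aᵀ * A = 1)
    (P : Matrix (Fin p) (Fin p) ℝ) (hP : IsUnit P) (hXA : X = A * P)
    (θ : Fin p → ℝ)
    (hθ : IsCanonAngles A
      (Matrix.of fun (i : Fin d) (j : Fin q) => if (i : ℕ) = (j : ℕ) then (1 : ℝ) else 0) θ) :
    let Tq : Matrix (Fin (d - q)) (Fin p) ℝ :=
      (Matrix.of fun (i : Fin (d - q)) (j : Fin p) => X ⟨q + i, by have := i.isLt; omega⟩ j) *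
        (topBlock (hpq.trans hqd.le) X)⁻¹
    (∀ j, θ j < Real.pi / 2) ∧
    specNorm (Matrix.diagonal fun j => Real.tan (θ j)) ≤ specNorm Tq ∧
    frobNorm (Matrix.diagonal fun j => Real.tan (θ j)) ≤ frobNorm Tq ∧
    (p = q →
      specNorm (Matrix.diagonal fun j => Real.tan (θ j)) = specNorm Tq ∧
      frobNorm (Matrix.diagonal fun j => Real.tan (θ j)) = frobNorm Tq) := by
  intro Tq
  obtain ⟨hmono, hrange, h, e, hcos⟩ := hθ
  have hpd : p ≤ d := hpq.trans hqd.le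
  set Sm : Matrix (Fin p) (Fin p) ℝ :=
    (Aᵀ * Matrix.of fun (i : Fin d) (j : Fin q) => if (i : ℕ) = (j : ℕ) then (1 : ℝ) else 0) *
      (Aᵀ * Matrix.of fun (i : Fin d) (j : Fin q) =>
        if (i : ℕ) = (j : ℕ) then (1 : ℝ) else 0)ᵀ with hSmdef
  set lam : Fin p → ℝ := h.eigenvalues with hlamdef
  set Atop : Matrix (Fin p) (Fin p) ℝ := topBlock hpd A with hAtopdef
  set A1 : Matrix (Fin q) (Fin p) ℝ :=
    Matrix.of (fun i j => A (Fin.castLE hqd.le i) j) with hA1def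
  set A2 : Matrix (Fin (d - q)) (Fin p) ℝ :=
    Matrix.of (fun i j => A ⟨q + i, by have := i.isLt; omega⟩ j) with hA2def
  -- S = A1ᵀ A1
  have hABl : ∀ (jj : Fin p) (l : Fin q),
      (Aᵀ * Matrix.of fun (i : Fin d) (j : Fin q) =>
        if (i : ℕ) = (j : ℕ) then (1 : ℝ) else 0) jj l = A1 l jj := by
    intro jj l
    rw [Matrix.mul_apply, Finset.sum_eq_single (Fin.castLE hqd.le l)]
    · simp [hA1def]
    · intro b _ hb
      have hbv : ¬ ((b : ℕ) = (l : ℕ)) := by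
        intro hh; apply hb; ext; simpa using hh
      simp [hbv]
    · simp
  have hS : Sm = A1ᵀ * A1 := by
    ext jj k
    rw [hSmdef, Matrix.mul_apply, Matrix.mul_apply]
    apply Finset.sum_congr rfl
    intro l _
    rw [Matrix.transpose_apply, Matrix.transpose_apply, hABl jj l, hABl k l]
  -- componentwise identifications (definitional)
  have hA1v : ∀ (u : Fin p → ℝ) (i : Fin q),
      (A1 *ᵥ u) i = (A *ᵥ u) (Fin.castLE hqd.le i) := fun u i => rfl
  have hAtopv : ∀ (u : Fin p → ℝ) (i : Fin p),
      (Atop *ᵥ u) i = (A *ᵥ u) (Fin.castLE hpd i) := fun u i => rfl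
  have hA2v : ∀ (u : Fin p → ℝ) (i : Fin (d - q)),
      (A2 *ᵥ u) i = (A *ᵥ u) ⟨q + i, by have := i.isLt; omega⟩ := fun u i => rfl
  have qS : ∀ u : Fin p → ℝ,
      u ⬝ᵥ (Sm *ᵥ u) = ∑ i : Fin q, ((A *ᵥ u) (Fin.castLE hqd.le i))^2 := by
    intro u; rw [hS, quad_form_eq]
    exact Finset.sum_congr rfl fun i _ => by rw [hA1v]
  have qT : ∀ u : Fin p → ℝ,
      u ⬝ᵥ ((Atopᵀ * Atop) *ᵥ u) = ∑ i : Fin p, ((A *ᵥ u) (Fin.castLE hpd i))^2 := by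
    intro u; rw [quad_form_eq]
    exact Finset.sum_congr rfl fun i _ => by rw [hAtopv]
  have qAll : ∀ u : Fin p → ℝ, ∑ i : Fin d, ((A *ᵥ u) i)^2 = ∑ j, u j ^2 := by
    intro u
    have hq := quad_form_eq A u
    rw [hA, Matrix.one_mulVec] at hq
    rw [← hq]
    simp [dotProduct, sq]
  have splitq : ∀ u : Fin p → ℝ,
      (∑ i : Fin q, ((A *ᵥ u) (Fin.castLE hqd.le i))^2) +
        (∑ i : Fin (d - q), ((A2 *ᵥ u) i)^2) = ∑ j, u j ^2 := by
    intro u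
    rw [← qAll u, finSumSplit hqd.le (fun i => ((A *ᵥ u) i)^2)]
    congr 1
  have hTleS : ∀ u : Fin p → ℝ, u ⬝ᵥ ((Atopᵀ * Atop) *ᵥ u) ≤ u ⬝ᵥ (Sm *ᵥ u) := by
    intro u
    rw [qT, qS, finSumSplit hpq (fun i : Fin q => ((A *ᵥ u) (Fin.castLE hqd.le i))^2)]
    have hcomp : ∀ i : Fin p,
        ((A *ᵥ u) (Fin.castLE hqd.le (Fin.castLE hpq i)))^2 = ((A *ᵥ u) (Fin.castLE hpd i))^2 :=
      fun i => rfl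
    simp only [hcomp]
    have : (0:ℝ) ≤ ∑ i : Fin (q - p),
        ((A *ᵥ u) (Fin.castLE hqd.le ⟨p + i, by have := i.isLt; omega⟩))^2 :=
      Finset.sum_nonneg fun _ _ => sq_nonneg _
    linarith
  have hSleOne : ∀ u : Fin p → ℝ, u ⬝ᵥ (Sm *ᵥ u) ≤ ∑ j, u j ^2 := by
    intro u
    rw [qS, ← splitq u]
    have : (0:ℝ) ≤ ∑ i : Fin (d - q), ((A2 *ᵥ u) i)^2 :=
      Finset.sum_nonneg fun _ _ => sq_nonneg _
    linarith
  -- invertibility of Atop and the form of Tq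
  have hXtop : topBlock (hpq.trans hqd.le) X = Atop * P := by
    ext i j
    rw [hXA]
    rfl
  have hdet : IsUnit Atop.det := by
    rw [hXtop] at hX
    rw [Matrix.isUnit_iff_isUnit_det, Matrix.det_mul] at hX
    exact isUnit_of_mul_isUnit_left hX
  have hAtopInv : Atop⁻¹ * Atop = 1 := Matrix.nonsing_inv_mul _ hdet
  have hAtopInv' : Atop * Atop⁻¹ = 1 := Matrix.mul_nonsing_inv _ hdet
  have hPP : P * P⁻¹ = 1 := Matrix.mul_nonsing_inv _ ((Matrix.isUnit_iff_isUnit_det _).mp hP)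
  have hX2 : (Matrix.of fun (i : Fin (d - q)) (j : Fin p) =>
      X ⟨q + i, by have := i.isLt; omega⟩ j) = A2 * P := by
    ext i j
    rw [Matrix.of_apply, hXA]
    rfl
  have hTqEq : Tq = A2 * Atop⁻¹ := by
    have hTq0 : Tq = (Matrix.of fun (i : Fin (d - q)) (j : Fin p) =>
        X ⟨q + i, by have := i.isLt; omega⟩ j) * (topBlock (hpq.trans hqd.le) X)⁻¹ := rfl
    rw [hTq0, hX2, hXtop, Matrix.mul_inv_rev, Matrix.mul_assoc A2 P _,
      ← Matrix.mul_assoc P P⁻¹ _, hPP, Matrix.one_mul]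
  -- eigenvalue facts
  have hposT : ∀ v : Fin p → ℝ, (∑ k, v k ^2 = 1) → 0 < ∑ i, ((Atop *ᵥ v) i)^2 := by
    intro v hv1
    have hvne : Atop *ᵥ v ≠ 0 := by
      intro hzero
      have : v = 0 := by
        have : Atop⁻¹ *ᵥ (Atop *ᵥ v) = v := by
          rw [Matrix.mulVec_mulVec, hAtopInv, Matrix.one_mulVec]
        rw [← this, hzero, Matrix.mulVec_zero]
      rw [this] at hv1
      simp at hv1
    obtain ⟨i, hi⟩ := Function.ne_iff.mp hvne
    apply Finset.sum_pos' (fun k _ => sq_nonneg _)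
    exact ⟨i, Finset.mem_univ i,
      lt_of_le_of_ne (sq_nonneg _) (Ne.symm (pow_ne_zero 2 hi))⟩
  have hlam_eq : ∀ i : Fin p, ∀ v : Fin p → ℝ, (∑ k, v k ^2 = 1) →
      Sm *ᵥ v = lam i • v → v ⬝ᵥ (Sm *ᵥ v) = lam i := by
    intro i v hv1 hveq
    rw [hveq, dotProduct_smul]
    have : v ⬝ᵥ v = 1 := by
      rw [← hv1]; simp [dotProduct, sq]
    rw [this]; simp
  have hlam_facts : ∀ i : Fin p, 0 < lam i ∧ lam i ≤ 1 := by
    intro i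
    obtain ⟨v, hv1, hveq⟩ := eig_unit_vec h i
    have hvS : v ⬝ᵥ (Sm *ᵥ v) = lam i := hlam_eq i v hv1 hveq
    constructor
    · have h1 : 0 < v ⬝ᵥ ((Atopᵀ * Atop) *ᵥ v) := by
        rw [quad_form_eq]; exact hposT v hv1
      linarith [hTleS v]
    · rw [← hvS, ← hv1]; exact hSleOne v
  have hlam_pos : ∀ i, 0 < lam i := fun i => (hlam_facts i).1
  have hlam_le1 : ∀ i, lam i ≤ 1 := fun i => (hlam_facts i).2
  -- angle facts
  have hcospos : ∀ j, 0 < Real.cos (θ j) := by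
    intro j
    have hge : 0 ≤ Real.cos (θ j) := by
      apply Real.cos_nonneg_of_mem_Icc
      constructor
      · have := (hrange j).1; have := Real.pi_pos; linarith
      · exact (hrange j).2
    have hne : Real.cos (θ j) ≠ 0 := by
      intro hz
      have := hcos j
      rw [hz] at this
      have := hlam_pos (e j)
      have hz2 : (0:ℝ) < Real.cos (θ j) ^ 2 := by rw [hcos j]; exact hlam_pos (e j)
      nlinarith [hlam_pos (e j)]
    exact lt_of_le_of_ne hge (Ne.symm hne)
  have part1 : ∀ j, θ j < Real.pi / 2 := by
    intro j
    refine lt_of_le_of_ne (hrange j).2 ?_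
    intro heq
    have := hcospos j
    rw [heq, Real.cos_pi_div_two] at this
    exact lt_irrefl 0 this
  have htan_nonneg : ∀ j, 0 ≤ Real.tan (θ j) := by
    intro j
    rw [Real.tan_eq_sin_div_cos]
    apply div_nonneg _ (hcospos j).le
    apply Real.sin_nonneg_of_nonneg_of_le_pi (hrange j).1
    have := Real.pi_pos; linarith [(hrange j).2]
  have htan_sq : ∀ j, Real.tan (θ j)^2 = (1 - lam (e j)) / lam (e j) := by
    intro j
    rw [Real.tan_eq_sin_div_cos, div_pow, Real.sin_sq, hcos j]
  -- spectral norm inequality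
  have hspec_j : ∀ j, Real.tan (θ j) ≤ specNorm Tq := by
    intro j
    obtain ⟨v, hv1, hveq⟩ := eig_unit_vec h (e j)
    have hvS : v ⬝ᵥ (Sm *ᵥ v) = lam (e j) := hlam_eq (e j) v hv1 hveq
    have hTpos : 0 < ∑ i, ((Atop *ᵥ v) i)^2 := hposT v hv1
    have hTle : ∑ i, ((Atop *ᵥ v) i)^2 ≤ lam (e j) := by
      have := hTleS v
      rw [quad_form_eq, hvS] at this
      exact this
    set s : ℝ := Real.sqrt (∑ i, ((Atop *ᵥ v) i)^2) with hsdef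
    have hs_pos : 0 < s := Real.sqrt_pos.mpr hTpos
    have hs_sq : s^2 = ∑ i, ((Atop *ᵥ v) i)^2 := Real.sq_sqrt hTpos.le
    set x : Fin p → ℝ := s⁻¹ • (Atop *ᵥ v) with hxdef
    have hx1 : ∑ k, x k ^2 = 1 := by
      rw [hxdef]
      simp only [Pi.smul_apply, smul_eq_mul, mul_pow]
      rw [← Finset.mul_sum, ← hs_sq]
      field_simp
    have hTx : Tq *ᵥ x = s⁻¹ • (A2 *ᵥ v) := by
      rw [hTqEq, hxdef, Matrix.mulVec_smul, Matrix.mulVec_mulVec,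
        Matrix.mul_assoc, hAtopInv, Matrix.mul_one]
    have hA2sum : ∑ i, ((A2 *ᵥ v) i)^2 = 1 - lam (e j) := by
      have := splitq v
      rw [← qS v, hvS, hv1] at this
      linarith
    have hsum : ∑ i, ((Tq *ᵥ x) i)^2 = (1 - lam (e j)) / (∑ i, ((Atop *ᵥ v) i)^2) := by
      rw [hTx]
      simp only [Pi.smul_apply, smul_eq_mul, mul_pow]
      rw [← Finset.mul_sum, hA2sum, ← hs_sq]
      field_simp
    have htan_le : Real.tan (θ j) ≤ Real.sqrt (∑ i, ((Tq *ᵥ x) i)^2) := by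
      rw [← Real.sqrt_sq (htan_nonneg j), htan_sq j, hsum]
      apply Real.sqrt_le_sqrt
      exact div_le_div_of_nonneg_left (by linarith [hlam_le1 (e j)]) hTpos hTle
    exact le_trans htan_le (le_specNorm Tq x hx1.le)
  have spec_le : specNorm (Matrix.diagonal fun j => Real.tan (θ j)) ≤ specNorm Tq := by
    apply specNorm_diagonal_le _ (specNorm_nonneg Tq)
    intro j
    rw [abs_of_nonneg (htan_nonneg j)]
    exact hspec_j j
  -- Frobenius norm inequality
  have hSsym : Smᵀ = Sm := by
    have he := h
    rw [Matrix.IsHermitian, Matrix.conjTranspose_eq_transpose_of_trivial] at he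
    exact he
  have hTsym : (Atopᵀ * Atop)ᵀ = Atopᵀ * Atop := by
    rw [Matrix.transpose_mul, Matrix.transpose_transpose]
  have hSdet : IsUnit Sm.det := by
    have hd : Sm.det = ∏ i, lam i := h.det_eq_prod_eigenvalues
    rw [hd, isUnit_iff_ne_zero, Finset.prod_ne_zero_iff]
    exact fun i _ => (hlam_pos i).ne'
  have hTdet : IsUnit (Atopᵀ * Atop).det := by
    rw [Matrix.det_mul, Matrix.det_transpose]
    exact hdet.mul hdet
  have hA2A2 : A2ᵀ * A2 = 1 - Sm := by
    have hsplitM : ∀ j k : Fin p, (A1ᵀ * A1) j k + (A2ᵀ * A2) j k =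
        (1 : Matrix (Fin p) (Fin p) ℝ) j k := by
      intro j k
      rw [← hA, Matrix.mul_apply, Matrix.mul_apply, Matrix.mul_apply,
        finSumSplit hqd.le (fun i => Aᵀ j i * A i k)]
      rfl
    ext j k
    have := hsplitM j k
    rw [hS]
    simp only [Matrix.sub_apply]
    linarith
  have hTpsd : ∀ u : Fin p → ℝ, 0 ≤ u ⬝ᵥ ((Atopᵀ * Atop) *ᵥ u) := by
    intro u
    rw [quad_form_eq]
    exact Finset.sum_nonneg fun _ _ => sq_nonneg _
  have hNpsd : ∀ w : Fin p → ℝ,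
      0 ≤ w ⬝ᵥ (((Atopᵀ * Atop)⁻¹ - Sm⁻¹) *ᵥ w) := by
    intro w
    rw [Matrix.sub_mulVec, dotProduct_sub, sub_nonneg]
    exact inv_quad_antitone Sm (Atopᵀ * Atop) hSsym hTsym hSdet hTdet hTpsd hTleS w
  have htr1 : Matrix.trace (Tqᵀ * Tq) =
      Matrix.trace ((1 - Sm) * (Atopᵀ * Atop)⁻¹) := by
    rw [hTqEq, Matrix.transpose_mul]
    rw [Matrix.mul_assoc, ← Matrix.trace_mul_comm]
    simp only [← Matrix.mul_assoc]
    rw [hA2A2, Matrix.mul_assoc, Matrix.mul_inv_rev, Matrix.transpose_nonsing_inv]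
  have htr2 : Matrix.trace ((1 - Sm) * Sm⁻¹) = ∑ j, Real.tan (θ j)^2 := by
    have hSS : Sm * Sm⁻¹ = 1 := Matrix.mul_nonsing_inv _ hSdet
    rw [Matrix.sub_mul, Matrix.one_mul, hSS, Matrix.trace_sub,
      trace_inv_eq h (fun i => (hlam_pos i).ne'), Matrix.trace_one]
    have hre : ∑ j, Real.tan (θ j)^2 = ∑ j, ((lam (e j))⁻¹ - 1) := by
      apply Finset.sum_congr rfl
      intro j _
      rw [htan_sq j, sub_div, div_self (hlam_pos (e j)).ne', one_div]
    rw [hre, Equiv.sum_comp e (fun i => (lam i)⁻¹ - 1), Finset.sum_sub_distrib]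
    simp
    rfl
  have htr_mono : Matrix.trace ((1 - Sm) * Sm⁻¹) ≤
      Matrix.trace ((1 - Sm) * (Atopᵀ * Atop)⁻¹) := by
    have hdiff : Matrix.trace ((1 - Sm) * (Atopᵀ * Atop)⁻¹) -
        Matrix.trace ((1 - Sm) * Sm⁻¹) =
        Matrix.trace ((A2ᵀ * A2) * ((Atopᵀ * Atop)⁻¹ - Sm⁻¹)) := by
      rw [hA2A2, Matrix.mul_sub, Matrix.trace_sub]
    have := trace_conj_nonneg A2 ((Atopᵀ * Atop)⁻¹ - Sm⁻¹) hNpsd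
    linarith
  have hfrob_sum : ∑ i, ∑ j, Tq i j ^2 = Matrix.trace ((1 - Sm) * (Atopᵀ * Atop)⁻¹) := by
    rw [← frob_trace Tq, htr1]
  have frob_le : frobNorm (Matrix.diagonal fun j => Real.tan (θ j)) ≤ frobNorm Tq := by
    rw [frobNorm, frobNorm, diag_sq_sum]
    apply Real.sqrt_le_sqrt
    rw [hfrob_sum, ← htr2]
    exact htr_mono
  refine ⟨part1, spec_le, frob_le, fun hpe => ?_⟩
  -- equality case p = q
  have hT_eq : Atopᵀ * Atop = Sm := by
    rw [hS]
    ext j k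
    rw [Matrix.mul_apply, Matrix.mul_apply,
      ← Equiv.sum_comp (finCongr hpe) (fun i : Fin q => (A1ᵀ) j i * A1 i k)]
    exact Finset.sum_congr rfl fun i _ => rfl
  set c : ℝ := specNorm (Matrix.diagonal fun j => Real.tan (θ j)) with hcdef
  clear_value c
  have hc0 : 0 ≤ c := by rw [hcdef]; exact specNorm_nonneg _
  have hcj : ∀ j, Real.tan (θ j) ≤ c := by
    intro j
    rw [hcdef]
    exact le_specNorm_diagonal (fun j => Real.tan (θ j)) j (htan_nonneg j)
  have h1pc : 0 < 1 + c^2 := by positivity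
  have hlam_lb : ∀ i, (1 + c^2)⁻¹ ≤ lam i := by
    intro i
    have htj := htan_sq (e.symm i)
    rw [Equiv.apply_symm_apply] at htj
    have htle : (1 - lam i) / lam i ≤ c^2 := by
      rw [← htj]
      exact pow_le_pow_left₀ (htan_nonneg (e.symm i)) (hcj (e.symm i)) 2
    have hli := hlam_pos i
    rw [div_le_iff₀ hli] at htle
    rw [inv_eq_one_div, div_le_iff₀ h1pc]
    have hring : lam i * (1 + c^2) = lam i + c^2 * lam i := by ring
    linarith
  have hquadS : ∀ y : Fin p → ℝ, (1 + c^2)⁻¹ * ∑ k, y k^2 ≤ y ⬝ᵥ (Sm *ᵥ y) :=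
    quad_eigen_lower h hlam_lb
  have spec_ge : specNorm Tq ≤ c := by
    apply specNorm_le _ hc0
    intro x hx
    set y : Fin p → ℝ := Atop⁻¹ *ᵥ x with hydef
    have hxy : Atop *ᵥ y = x := by
      rw [hydef, Matrix.mulVec_mulVec, hAtopInv', Matrix.one_mulVec]
    have hTx : Tq *ᵥ x = A2 *ᵥ y := by
      rw [hTqEq, ← hxy, Matrix.mulVec_mulVec, Matrix.mul_assoc, hAtopInv, Matrix.mul_one]
    have hsum1 : ∑ i, ((Tq *ᵥ x) i)^2 = (∑ k, y k^2) - y ⬝ᵥ (Sm *ᵥ y) := by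
      rw [hTx]
      have hsp := splitq y
      rw [← qS y] at hsp  -- wrong direction maybe
      linarith
    have hsum2 : y ⬝ᵥ (Sm *ᵥ y) = ∑ jj, x jj ^2 := by
      rw [← hT_eq, quad_form_eq]
      rw [hxy]
    have hySy_le1 : y ⬝ᵥ (Sm *ᵥ y) ≤ 1 := by rw [hsum2]; exact hx
    have hySy_nonneg : 0 ≤ y ⬝ᵥ (Sm *ᵥ y) := le_trans (hTpsd y) (hTleS y)
    have hyy : ∑ k, y k^2 ≤ (1 + c^2) * (y ⬝ᵥ (Sm *ᵥ y)) := by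
      have hmul := mul_le_mul_of_nonneg_left (hquadS y) h1pc.le
      rwa [← mul_assoc, mul_inv_cancel₀ h1pc.ne', one_mul] at hmul
    rw [hsum1]
    have hr : (1 + c^2) * (y ⬝ᵥ (Sm *ᵥ y)) = y ⬝ᵥ (Sm *ᵥ y) + c^2 * (y ⬝ᵥ (Sm *ᵥ y)) := by
      ring
    have hcc : c^2 * (y ⬝ᵥ (Sm *ᵥ y)) ≤ c^2 := by
      have := mul_le_mul_of_nonneg_left hySy_le1 (sq_nonneg c)
      simpa using this
    linarith
  have hfrob_eq : frobNorm (Matrix.diagonal fun j => Real.tan (θ j)) = frobNorm Tq := by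
    rw [frobNorm, frobNorm, diag_sq_sum]
    congr 1
    rw [hfrob_sum, hT_eq, htr2]
  exact ⟨le_antisymm spec_le spec_ge, hfrob_eq⟩
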